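/- arXiv:2009.02087 — 3 statements merged into one kernel-verified Lean document; each statement's English description precedes it below -/
import Mathlib

section
/- Let n ≥ 1, let b₁,…,bₙ ∈ ℂ and c ∈ ℂ with c not a nonpositive integer, and fix x = (x₁,…,xₙ) ∈ ℂⁿ. Then, as the real parameter a tends to +∞, F_D(a, b₁,…,bₙ; c; x₁/a,…,xₙ/a) converges to Φ₂^{(n)}[b₁,…,bₙ; c; x₁,…,xₙ]. -/
open Finset Filter Topology

set_option maxHeartbeats 1000000

/-- The Humbert function `Φ₂⁽ⁿ⁾[b₁,…,bₙ; c; x₁,…,xₙ]`. -/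
noncomputable def humbertC (n : ℕ) (b : Fin n → ℂ) (c : ℂ) (x : Fin n → ℂ) : ℂ :=
  ∑' m : Fin n → ℕ,
    (∏ j, (ascPochhammer ℂ (m j)).eval (b j)) / (ascPochhammer ℂ (∑ j, m j)).eval c *
      ∏ j, x j ^ m j / ((m j).factorial : ℂ)

/-- The Lauricella hypergeometric function `F_D(a, b₁,…,bₙ; c; x₁,…,xₙ)`. -/
noncomputable def lauricellaFD (n : ℕ) (a : ℂ) (b : Fin n → ℂ) (c : ℂ)
    (x : Fin n → ℂ) : ℂ :=
  ∑' m : Fin n → ℕ,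
    (ascPochhammer ℂ (∑ j, m j)).eval a *
        (∏ j, (ascPochhammer ℂ (m j)).eval (b j)) / (ascPochhammer ℂ (∑ j, m j)).eval c *
      ∏ j, x j ^ m j / ((m j).factorial : ℂ)

lemma asc_eval_prod {S : Type*} [CommSemiring S] (r : S) (M : ℕ) :
    (ascPochhammer S M).eval r = ∏ i ∈ Finset.range M, (r + i) := by
  induction M with
  | zero => simp
  | succ M ih => rw [ascPochhammer_succ_eval, ih, Finset.prod_range_succ]

lemma norm_asc_le (y : ℂ) (M : ℕ) :
    ‖(ascPochhammer ℂ M).eval y‖ ≤ (‖y‖ + 1) ^ M * (M.factorial : ℝ) := by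
  rw [asc_eval_prod]
  calc ‖∏ i ∈ Finset.range M, (y + i)‖ = ∏ i ∈ Finset.range M, ‖y + (i:ℂ)‖ := norm_prod _ _
    _ ≤ ∏ i ∈ Finset.range M, (‖y‖ + 1) * (i + 1) := by
        apply Finset.prod_le_prod (fun i _ => norm_nonneg _)
        intro i _
        calc ‖y + (i:ℂ)‖ ≤ ‖y‖ + ‖(i:ℂ)‖ := norm_add_le _ _
          _ = ‖y‖ + i := by norm_num
          _ ≤ (‖y‖ + 1) * (i + 1) := by nlinarith [norm_nonneg y, Nat.cast_nonneg (α := ℝ) i]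
    _ = (‖y‖ + 1) ^ M * (M.factorial : ℝ) := by
        rw [Finset.prod_mul_distrib, Finset.prod_const, Finset.card_range]
        congr 1
        push_cast [← Finset.prod_range_add_one_eq_factorial]
        rfl

lemma summable_pi_geom {n : ℕ} (r : Fin n → ℝ) (h0 : ∀ j, 0 ≤ r j) (h1 : ∀ j, r j < 1) :
    Summable (fun m : Fin n → ℕ => ∏ j, r j ^ m j) := by
  induction n with
  | zero =>
      haveI : Unique (Fin 0 → ℕ) := ⟨⟨fun i => i.elim0⟩, fun f => funext fun i => i.elim0⟩
      exact .of_finite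
  | succ n ih =>
      have key : Summable (fun p : ℕ × (Fin n → ℕ) =>
          (r 0) ^ p.1 * ∏ j : Fin n, (r j.succ) ^ (p.2 j)) := by
        refine Summable.mul_of_nonneg (f := fun k : ℕ => (r 0) ^ k)
          (g := fun m : Fin n → ℕ => ∏ j : Fin n, (r j.succ) ^ (m j))
          (summable_geometric_of_lt_one (h0 0) (h1 0))
          (ih (fun j => r j.succ) (fun j => h0 _) (fun j => h1 _))
          (fun k => pow_nonneg (h0 0) _)
          (fun m => Finset.prod_nonneg fun j _ => pow_nonneg (h0 _) _)
      have := ((Fin.consEquiv (fun _ : Fin (n+1) => ℕ)).summable_iff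
        (f := fun m : Fin (n+1) → ℕ => ∏ j, r j ^ m j)).1
      refine (this ?_)
      convert key using 1
      ext p
      obtain ⟨k, m⟩ := p
      simp [Fin.consEquiv, Fin.prod_univ_succ]

lemma prod_le_of_tail_one {w : ℕ → ℝ} (hw1 : ∀ i, 1 ≤ w i) {N : ℕ}
    (hN : ∀ i, N ≤ i → w i = 1) (M : ℕ) :
    ∏ i ∈ Finset.range M, w i ≤ ∏ i ∈ Finset.range N, w i := by
  rcases le_or_gt M N with h | h
  · calc ∏ i ∈ Finset.range M, w i
        ≤ (∏ i ∈ Finset.range M, w i) * ∏ i ∈ Finset.Ico M N, w i := by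
          apply le_mul_of_one_le_right
          · exact Finset.prod_nonneg fun i _ => le_trans zero_le_one (hw1 i)
          · calc (1:ℝ) = ∏ _i ∈ Finset.Ico M N, (1:ℝ) := by rw [Finset.prod_const_one]
              _ ≤ ∏ i ∈ Finset.Ico M N, w i :=
                Finset.prod_le_prod (fun i _ => zero_le_one) (fun i _ => hw1 i)
      _ = ∏ i ∈ Finset.range N, w i := Finset.prod_range_mul_prod_Ico _ h
  · rw [← Finset.prod_range_mul_prod_Ico w h.le]
    have : ∏ i ∈ Finset.Ico N M, w i = 1 :=
      Finset.prod_eq_one fun i hi => hN i (Finset.mem_Ico.1 hi).1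
    rw [this, mul_one]

lemma term_factor {n : ℕ} (b : Fin n → ℂ) (c : ℂ) (x : Fin n → ℂ) (a : ℂ) (m : Fin n → ℕ) :
    (ascPochhammer ℂ (∑ j, m j)).eval a *
        (∏ j, (ascPochhammer ℂ (m j)).eval (b j)) / (ascPochhammer ℂ (∑ j, m j)).eval c *
      ∏ j, (x j / a) ^ m j / ((m j).factorial : ℂ)
    = (∏ i ∈ Finset.range (∑ j, m j), ((a + i) / a)) *
      ((∏ j, (ascPochhammer ℂ (m j)).eval (b j)) / (ascPochhammer ℂ (∑ j, m j)).eval c *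
        ∏ j, x j ^ m j / ((m j).factorial : ℂ)) := by
  rw [asc_eval_prod a]
  have h1 : ∏ j, (x j / a) ^ m j / ((m j).factorial : ℂ)
      = (∏ j, x j ^ m j / ((m j).factorial : ℂ)) * (a ^ (∑ j, m j))⁻¹ := by
    calc ∏ j, (x j / a) ^ m j / ((m j).factorial : ℂ)
        = ∏ j, (x j ^ m j / ((m j).factorial : ℂ) * (a ^ m j)⁻¹) := by
          refine Finset.prod_congr rfl fun j _ => by rw [div_pow]; ring
      _ = (∏ j, x j ^ m j / ((m j).factorial : ℂ)) * ∏ j, (a ^ m j)⁻¹ :=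
          Finset.prod_mul_distrib
      _ = (∏ j, x j ^ m j / ((m j).factorial : ℂ)) * (a ^ (∑ j, m j))⁻¹ := by
          rw [Finset.prod_inv_distrib, Finset.prod_pow_eq_pow_sum]
  have h2 : ∏ i ∈ Finset.range (∑ j, m j), ((a + i) / a)
      = (∏ i ∈ Finset.range (∑ j, m j), (a + i)) * (a ^ (∑ j, m j))⁻¹ := by
    rw [Finset.prod_div_distrib, Finset.prod_const, Finset.card_range, div_eq_mul_inv]
  rw [h1, h2]
  ring

lemma prod_ratio_tendsto (M : ℕ) :
    Tendsto (fun a : ℝ => ∏ i ∈ Finset.range M, (((a:ℂ) + i) / (a:ℂ))) atTop (𝓝 1) := by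
  have hinv : Tendsto (fun a : ℝ => ((a:ℂ))⁻¹) atTop (𝓝 0) := by
    have h0 := (Complex.continuous_ofReal.tendsto 0).comp (tendsto_inv_atTop_zero (𝕜 := ℝ))
    refine h0.congr (fun a => ?_) |>.mono_right (by norm_num)
    simp [Complex.ofReal_inv]
  have : Tendsto (fun a : ℝ => ∏ i ∈ Finset.range M, (((a:ℂ) + i) / (a:ℂ))) atTop
      (𝓝 (∏ _i ∈ Finset.range M, (1:ℂ))) := by
    apply tendsto_finset_prod
    intro i _
    have h1 : Tendsto (fun a : ℝ => 1 + (i:ℂ) * ((a:ℂ))⁻¹) atTop (𝓝 (1 + (i:ℂ) * 0)) :=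
      tendsto_const_nhds.add (tendsto_const_nhds.mul hinv)
    have h2 : (fun a : ℝ => 1 + (i:ℂ) * ((a:ℂ))⁻¹) =ᶠ[atTop]
        (fun a : ℝ => ((a:ℂ) + i) / (a:ℂ)) := by
      filter_upwards [eventually_ge_atTop (1:ℝ)] with a ha
      have ha0 : (a:ℂ) ≠ 0 := by
        simp only [ne_eq, Complex.ofReal_eq_zero]
        linarith
      field_simp
    simpa using h1.congr' h2
  simpa using this

theorem lauricella_tendsto_humbert' (n : ℕ) (b : Fin n → ℂ) (c : ℂ)
    (hc : ∀ k : ℕ, c ≠ -(k : ℂ)) (x : Fin n → ℂ) :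
    Tendsto (fun a : ℝ => ∑' m : Fin n → ℕ,
      ((ascPochhammer ℂ (∑ j, m j)).eval (a:ℂ) *
        (∏ j, (ascPochhammer ℂ (m j)).eval (b j)) / (ascPochhammer ℂ (∑ j, m j)).eval c *
      ∏ j, (x j / (a:ℂ)) ^ m j / ((m j).factorial : ℂ)))
      atTop (𝓝 (∑' m : Fin n → ℕ,
      ((∏ j, (ascPochhammer ℂ (m j)).eval (b j)) / (ascPochhammer ℂ (∑ j, m j)).eval c *
        ∏ j, x j ^ m j / ((m j).factorial : ℂ)))) := by
  have hcne : ∀ i : ℕ, c + (i:ℂ) ≠ 0 := by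
    intro i h
    exact hc i (by linear_combination h)
  set a₀ : ℝ := 1 + ∑ j, 8 * (‖b j‖ + 1) * (‖x j‖ + 1) with ha₀def
  have hsum_nonneg : (0:ℝ) ≤ ∑ j, 8 * (‖b j‖ + 1) * (‖x j‖ + 1) :=
    Finset.sum_nonneg fun j _ => by positivity
  have ha₀1 : (1:ℝ) ≤ a₀ := by simp only [ha₀def]; linarith
  have ha₀0 : (0:ℝ) < a₀ := lt_of_lt_of_le zero_lt_one ha₀1
  set ρ : Fin n → ℝ := fun j => 4 * (‖b j‖ + 1) * ‖x j‖ / a₀ with hρdef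
  have hρ0 : ∀ j, 0 ≤ ρ j := fun j => by positivity
  have hρ1 : ∀ j, ρ j < 1 := by
    intro j
    rw [hρdef, div_lt_one ha₀0, ha₀def]
    have hj : 8 * (‖b j‖ + 1) * (‖x j‖ + 1) ≤ ∑ j, 8 * (‖b j‖ + 1) * (‖x j‖ + 1) :=
      Finset.single_le_sum (f := fun j => 8 * (‖b j‖ + 1) * (‖x j‖ + 1))
        (fun j _ => by positivity) (Finset.mem_univ j)
    nlinarith [norm_nonneg (b j), norm_nonneg (x j)]
  set w : ℕ → ℝ := fun i => max 1 ((a₀ + i) / (4 * ‖c + (i:ℂ)‖)) with hwdef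
  set N₁ : ℕ := ⌈a₀ + 4 * ‖c‖⌉₊ with hN₁def
  set C₁ : ℝ := ∏ i ∈ Finset.range N₁, w i with hC₁def
  have hw1 : ∀ i, 1 ≤ w i := fun i => le_max_left _ _
  have hwN : ∀ i, N₁ ≤ i → w i = 1 := by
    intro i hi
    apply max_eq_left
    have hnorm : (i:ℝ) - ‖c‖ ≤ ‖c + (i:ℂ)‖ := by
      have : ‖(i:ℂ)‖ ≤ ‖c + (i:ℂ)‖ + ‖c‖ := by
        calc ‖(i:ℂ)‖ = ‖(c + (i:ℂ)) - c‖ := by ring_nf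
          _ ≤ ‖c + (i:ℂ)‖ + ‖c‖ := norm_sub_le _ _
      have hni : ‖(i:ℂ)‖ = (i:ℝ) := by norm_num
      linarith [this, hni ▸ this]
    have hiN : a₀ + 4 * ‖c‖ ≤ (i:ℝ) := le_trans (Nat.le_ceil _) (by exact_mod_cast hi)
    have hpos : (0:ℝ) < 4 * ‖c + (i:ℂ)‖ := by
      have := norm_pos_iff.2 (hcne i)
      linarith
    rw [div_le_one hpos]
    linarith
  have hC₁ : ∀ M, ∏ i ∈ Finset.range M, w i ≤ C₁ := prod_le_of_tail_one hw1 hwN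
  have hC₁1 : (1:ℝ) ≤ C₁ := by
    calc (1:ℝ) = ∏ _i ∈ Finset.range N₁, (1:ℝ) := by rw [Finset.prod_const_one]
      _ ≤ C₁ := Finset.prod_le_prod (fun i _ => zero_le_one) (fun i _ => hw1 i)
  -- the dominating function
  set D : (Fin n → ℕ) → ℝ := fun m => C₁ * ∏ j, ρ j ^ m j with hDdef
  have h_sum : Summable D := (summable_pi_geom ρ hρ0 hρ1).mul_left C₁
  clear_value a₀ ρ w N₁ C₁ D
  apply tendsto_tsum_of_dominated_convergence h_sum
  · -- pointwise convergence
    intro m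
    have hfac : ∀ a : ℝ,
        (ascPochhammer ℂ (∑ j, m j)).eval (a:ℂ) *
          (∏ j, (ascPochhammer ℂ (m j)).eval (b j)) / (ascPochhammer ℂ (∑ j, m j)).eval c *
          ∏ j, (x j / (a:ℂ)) ^ m j / ((m j).factorial : ℂ)
        = (∏ i ∈ Finset.range (∑ j, m j), (((a:ℂ) + i) / (a:ℂ))) *
          ((∏ j, (ascPochhammer ℂ (m j)).eval (b j)) / (ascPochhammer ℂ (∑ j, m j)).eval c *
            ∏ j, x j ^ m j / ((m j).factorial : ℂ)) := fun a => term_factor b c x _ m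
    simp only [hfac]
    have := (prod_ratio_tendsto (∑ j, m j)).mul_const
      ((∏ j, (ascPochhammer ℂ (m j)).eval (b j)) / (ascPochhammer ℂ (∑ j, m j)).eval c *
        ∏ j, x j ^ m j / ((m j).factorial : ℂ))
    simpa using this
  · -- the bound
    filter_upwards [eventually_ge_atTop a₀] with a ha m
    have ha1 : (1:ℝ) ≤ a := le_trans ha₀1 ha
    have ha0 : (0:ℝ) < a := lt_of_lt_of_le zero_lt_one ha1
    rw [term_factor b c x _ m]
    set M := ∑ j, m j with hM
    clear_value M
    rw [norm_mul]
    have hnp : ‖∏ i ∈ Finset.range M, (((a:ℂ) + i) / (a:ℂ))‖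
        = ∏ i ∈ Finset.range M, ((a + i) / a) := by
      rw [norm_prod]
      refine Finset.prod_congr rfl fun i _ => ?_
      have h1 : ((a:ℂ) + i) = ((a + i : ℝ) : ℂ) := by push_cast; ring
      rw [h1, norm_div]
      simp only [Complex.norm_real, Real.norm_eq_abs]
      rw [abs_of_pos (by positivity), abs_of_pos ha0]
    have hGnorm : ‖(∏ j, (ascPochhammer ℂ (m j)).eval (b j)) /
          (ascPochhammer ℂ M).eval c * ∏ j, x j ^ m j / ((m j).factorial : ℂ)‖
        = (∏ j, ‖(ascPochhammer ℂ (m j)).eval (b j)‖) / (∏ i ∈ Finset.range M, ‖c + (i:ℂ)‖)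
          * ∏ j, ‖x j‖ ^ m j / ((m j).factorial : ℝ) := by
      rw [norm_mul, norm_div, norm_prod, asc_eval_prod c, norm_prod, norm_prod]
      congr 1
      refine Finset.prod_congr rfl fun j _ => ?_
      rw [norm_div, norm_pow]
      norm_num
    rw [hnp, hGnorm]
    -- step 1 : monotonicity in a
    have step1 : ∏ i ∈ Finset.range M, ((a + i) / a) ≤ ∏ i ∈ Finset.range M, ((a₀ + i) / a₀) := by
      refine Finset.prod_le_prod (fun i _ => by positivity) fun i _ => ?_
      rw [div_le_div_iff₀ ha0 ha₀0]
      nlinarith [Nat.cast_nonneg (α := ℝ) i]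
    have hside : (0:ℝ) ≤ (∏ j, ‖(ascPochhammer ℂ (m j)).eval (b j)‖) /
          (∏ i ∈ Finset.range M, ‖c + (i:ℂ)‖) * ∏ j, ‖x j‖ ^ m j / ((m j).factorial : ℝ) :=
      mul_nonneg (div_nonneg (Finset.prod_nonneg fun j _ => norm_nonneg _)
        (Finset.prod_nonneg fun i _ => norm_nonneg _))
        (Finset.prod_nonneg fun j _ => div_nonneg (pow_nonneg (norm_nonneg _) _)
          (Nat.cast_nonneg _))
    calc (∏ i ∈ Finset.range M, ((a + i) / a)) *
          ((∏ j, ‖(ascPochhammer ℂ (m j)).eval (b j)‖) /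
            (∏ i ∈ Finset.range M, ‖c + (i:ℂ)‖) * ∏ j, ‖x j‖ ^ m j / ((m j).factorial : ℝ))
        ≤ (∏ i ∈ Finset.range M, ((a₀ + i) / a₀)) *
          ((∏ j, ‖(ascPochhammer ℂ (m j)).eval (b j)‖) /
            (∏ i ∈ Finset.range M, ‖c + (i:ℂ)‖) * ∏ j, ‖x j‖ ^ m j / ((m j).factorial : ℝ)) :=
          mul_le_mul_of_nonneg_right step1 hside
      _ = (∏ i ∈ Finset.range M, ((a₀ + i) / a₀ / ‖c + (i:ℂ)‖)) *
          ((∏ j, ‖(ascPochhammer ℂ (m j)).eval (b j)‖) *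
            ∏ j, ‖x j‖ ^ m j / ((m j).factorial : ℝ)) := by
          rw [Finset.prod_div_distrib (g := fun i : ℕ => ‖c + (i:ℂ)‖)]
          ring
      _ ≤ ((4 / a₀) ^ M * C₁) *
          ((∏ j, ((‖b j‖ + 1) ^ m j * ((m j).factorial : ℝ))) *
            ∏ j, ‖x j‖ ^ m j / ((m j).factorial : ℝ)) := by
          have hb1 : ∏ j, ‖(ascPochhammer ℂ (m j)).eval (b j)‖
              ≤ ∏ j, ((‖b j‖ + 1) ^ m j * ((m j).factorial : ℝ)) :=
            Finset.prod_le_prod (fun j _ => norm_nonneg _) fun j _ => norm_asc_le (b j) (m j)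
          have hu : ∏ i ∈ Finset.range M, ((a₀ + i) / a₀ / ‖c + (i:ℂ)‖)
              ≤ (4 / a₀) ^ M * C₁ := by
            calc ∏ i ∈ Finset.range M, ((a₀ + i) / a₀ / ‖c + (i:ℂ)‖)
                ≤ ∏ i ∈ Finset.range M, ((4 / a₀) * w i) := by
                  refine Finset.prod_le_prod (fun i _ => by positivity) fun i _ => ?_
                  have hcp : (0:ℝ) < ‖c + (i:ℂ)‖ := norm_pos_iff.2 (hcne i)
                  have heq : (a₀ + i) / a₀ / ‖c + (i:ℂ)‖
                      = (4 / a₀) * ((a₀ + i) / (4 * ‖c + (i:ℂ)‖)) := by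
                    field_simp
                  rw [heq]
                  have hwge : (a₀ + i) / (4 * ‖c + (i:ℂ)‖) ≤ w i := by
                    rw [hwdef]; exact le_max_right _ _
                  exact mul_le_mul_of_nonneg_left hwge (by positivity)
              _ = (4 / a₀) ^ M * ∏ i ∈ Finset.range M, w i := by
                  rw [Finset.prod_mul_distrib, Finset.prod_const, Finset.card_range]
              _ ≤ (4 / a₀) ^ M * C₁ :=
                  mul_le_mul_of_nonneg_left (hC₁ M) (by positivity)
          refine mul_le_mul hu (mul_le_mul_of_nonneg_right hb1 ?_) ?_ ?_
          · exact Finset.prod_nonneg fun j _ => by positivity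
          · refine mul_nonneg (Finset.prod_nonneg fun j _ => norm_nonneg _)
              (Finset.prod_nonneg fun j _ => by positivity)
          · positivity
      _ = D m := by
          rw [hDdef]
          simp only []
          rw [hM, ← Finset.prod_pow_eq_pow_sum]
          rw [show ∀ u v p q : ℝ, u * p * (v * q) = p * (u * (v * q)) from fun u v p q => by ring]
          congr 1
          rw [← Finset.prod_mul_distrib, ← Finset.prod_mul_distrib]
          refine Finset.prod_congr rfl fun j _ => ?_
          have hf : ((m j).factorial : ℝ) ≠ 0 := Nat.cast_ne_zero.2 (m j).factorial_ne_zero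
          rw [hρdef]
          show (4 / a₀) ^ m j * ((‖b j‖ + 1) ^ m j * ((m j).factorial : ℝ) *
            (‖x j‖ ^ m j / ((m j).factorial : ℝ))) = (4 * (‖b j‖ + 1) * ‖x j‖ / a₀) ^ m j
          rw [show (4:ℝ) * (‖b j‖ + 1) * ‖x j‖ / a₀ = 4 / a₀ * (‖b j‖ + 1) * ‖x j‖ from by
            ring, mul_pow, mul_pow]
          field_simp


/-- `F_D(a, b; c; x/a) → Φ₂⁽ⁿ⁾[b; c; x]` as the real parameter `a → +∞`. -/
theorem lauricella_tendsto_humbert (n : ℕ) (hn : 1 ≤ n) (b : Fin n → ℂ) (c : ℂ)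
    (hc : ∀ k : ℕ, c ≠ -(k : ℂ)) (x : Fin n → ℂ) :
    Tendsto (fun a : ℝ => lauricellaFD n (a : ℂ) b c (fun j => x j / (a : ℂ)))
      atTop (nhds (humbertC n b c x)) := by
  simpa only [lauricellaFD, humbertC] using lauricella_tendsto_humbert' n b c hc x
end

section
/- Let n ≥ 2, κ > 0, ν ∈ ℂ, and x = (x₁,…,xₙ) ∈ ℝⁿ. Then, as the positive integer m tends to ∞, F_D(−mν, κ,…,κ; nκ; 1−e^{(x₁−xₙ)/m},…,1−e^{(x_{n−1}−xₙ)/m}) converges to Φ₂^{(n−1)}[κ,…,κ; nκ; ν(x₁−xₙ),…,ν(x_{n−1}−xₙ)] (here F_D has n−1 lower parameters, all equal to κ). -/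
open Finset Filter
set_option maxHeartbeats 1000000

/- ### Auxiliary lemmas -/

open scoped Topology

lemma my_ascPochhammer_eval_prod (S : Type*) [CommSemiring S] (n : ℕ) (x : S) :
    (ascPochhammer S n).eval x = ∏ i ∈ Finset.range n, (x + i) := by
  induction n with
  | zero => simp
  | succ n ih => rw [ascPochhammer_succ_eval, ih, prod_range_succ]

lemma my_prod_range_factorial_mul (M1 : ℕ) (h : 1 ≤ M1) (s : ℕ) :
    ∏ i ∈ Finset.range s, (M1 + i) ≤ s.factorial * (M1 + s) ^ M1 := by
  have h1 : ∏ i ∈ Finset.range s, (M1 + i) = M1.ascFactorial s := by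
    induction s with
    | zero => simp
    | succ s ih => rw [prod_range_succ, ih, Nat.ascFactorial_succ, mul_comm]
  rw [h1, Nat.ascFactorial_eq_factorial_mul_choose']
  have h2 : (M1 + s - 1).choose s = (M1 + s - 1).choose (M1 - 1) := by
    rw [← Nat.choose_symm (by omega)]
    congr 1; omega
  have h3 : (M1 + s - 1).choose (M1 - 1) ≤ (M1 + s) ^ M1 :=
    (Nat.choose_le_pow _ _).trans
      (Nat.pow_le_pow_left (by omega) _ |>.trans (Nat.pow_le_pow_right (by omega) (by omega)))
  rw [h2]
  exact Nat.mul_le_mul_left _ h3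

lemma my_prod_one_add (s : ℕ) :
    ∏ i ∈ Finset.range s, (1 + (i:ℝ)) = (s.factorial : ℝ) := by
  have h : ∏ i ∈ Finset.range s, (1 + (i:ℝ)) = ((∏ i ∈ Finset.range s, (i+1) : ℕ) : ℝ) := by
    push_cast
    exact Finset.prod_congr rfl fun i _ => by ring
  rw [h, Finset.prod_range_add_one_eq_factorial]

lemma my_summable_pi_prod (f : ℕ → ℝ) (hf : Summable f) (h0 : ∀ k, 0 ≤ f k) (N : ℕ) :
    Summable (fun m : Fin N → ℕ => ∏ j, f (m j)) := by
  induction N with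
  | zero => exact Summable.of_finite
  | succ N ih =>
    have h2 : Summable (fun p : ℕ × (Fin N → ℕ) => f p.1 * ∏ j, f (p.2 j)) :=
      Summable.mul_of_nonneg (f := f) (g := fun m : Fin N → ℕ => ∏ j, f (m j)) hf ih h0
        (fun m => Finset.prod_nonneg fun j _ => h0 _)
    have h3 := (Fin.consEquiv (fun _ => ℕ)).symm.summable_iff.mpr h2
    refine h3.congr fun m => ?_
    simp [Fin.consEquiv, Fin.prod_univ_succ, Fin.tail]

lemma my_tendsto_const_div_nat (z : ℂ) :
    Tendsto (fun M : ℕ => z / (M : ℂ)) atTop (𝓝 0) := by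
  have h1 : Tendsto (fun M : ℕ => ((1:ℝ)/M : ℝ)) atTop (𝓝 0) :=
    tendsto_const_div_atTop_nhds_zero_nat 1
  have h2 : Tendsto (fun M : ℕ => (((1:ℝ)/M : ℝ) : ℂ)) atTop (𝓝 0) := by
    have := (Complex.continuous_ofReal.continuousAt (x := (0:ℝ))).tendsto.comp h1
    simpa [Function.comp_def] using this
  have h3 := h2.const_mul z
  rw [mul_zero] at h3
  refine h3.congr fun M => ?_
  push_cast
  ring

lemma my_tendsto_mul_one_sub_exp (τ : ℂ) :
    Tendsto (fun M : ℕ => (M : ℂ) * (1 - Complex.exp (τ / M))) atTop (𝓝 (-τ)) := by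
  rcases eq_or_ne τ 0 with rfl | hτ
  · simpa using tendsto_const_nhds (x := (0:ℂ)) |>.congr (fun M => by simp)
  · have hslope : Tendsto (fun z : ℂ => (Complex.exp z - 1) / z) (𝓝[≠] (0:ℂ)) (𝓝 1) := by
      have h := (Complex.hasDerivAt_exp 0)
      rw [Complex.exp_zero] at h
      rw [hasDerivAt_iff_tendsto_slope] at h
      exact h.congr fun z => by rw [slope_def_field, sub_zero, Complex.exp_zero]
    have hz : Tendsto (fun M : ℕ => τ / M) atTop (𝓝[≠] (0:ℂ)) := by
      rw [tendsto_nhdsWithin_iff]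
      refine ⟨my_tendsto_const_div_nat τ, ?_⟩
      filter_upwards [eventually_ge_atTop 1] with M hM
      have hM0 : (M:ℂ) ≠ 0 := by exact_mod_cast Nat.one_le_iff_ne_zero.mp hM
      simp [Set.mem_compl_iff, div_ne_zero hτ hM0]
    have h4 := (hslope.comp hz).const_mul (-τ)
    rw [mul_one] at h4
    refine h4.congr' ?_
    filter_upwards [eventually_ge_atTop 1] with M hM
    have hM0 : (M:ℂ) ≠ 0 := by exact_mod_cast Nat.one_le_iff_ne_zero.mp hM
    show -τ * ((Complex.exp (τ/M) - 1) / (τ/M)) = (M : ℂ) * (1 - Complex.exp (τ / M))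
    field_simp
    ring

lemma my_one_add_sum_le_prod {N : ℕ} (a : Fin N → ℕ) (s : Finset (Fin N)) :
    (1 + ∑ j ∈ s, (a j : ℝ)) ≤ ∏ j ∈ s, (1 + (a j : ℝ)) := by
  classical
  induction s using Finset.induction with
  | empty => simp
  | @insert j s' hj ih =>
    rw [Finset.prod_insert hj, Finset.sum_insert hj]
    have h1 : (0:ℝ) ≤ ∑ i ∈ s', (a i : ℝ) := Finset.sum_nonneg fun i _ => Nat.cast_nonneg _
    have h2 : (0:ℝ) ≤ (a j : ℝ) := Nat.cast_nonneg _
    nlinarith [ih]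

/-- Main auxiliary convergence lemma. -/
lemma my_main (N : ℕ) (κ c : ℝ) (hκ : 0 < κ) (hc : 0 < c) (ν : ℂ) (t : Fin N → ℝ) :
    Tendsto (fun M : ℕ => lauricellaFD N (-(M:ℂ) * ν) (fun _ => (κ:ℂ)) ((c:ℂ))
        (fun j => 1 - Complex.exp (((t j : ℝ) : ℂ) / (M:ℂ)))) atTop
      (𝓝 (humbertC N (fun _ => (κ:ℂ)) (c:ℂ) (fun j => ν * ((t j : ℝ) : ℂ)))) := by
  classical
  set A : ℝ := ‖ν‖ with hA
  have hA0 : 0 ≤ A := norm_nonneg ν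
  set T : ℝ := 1 + ∑ j, |t j| with hT
  have hsum0 : 0 ≤ ∑ j, |t j| := Finset.sum_nonneg fun j _ => abs_nonneg _
  have hT1 : (1:ℝ) ≤ T := by simp only [hT]; linarith
  have hT0 : (0:ℝ) < T := by linarith
  have hTj : ∀ j, |t j| ≤ T := by
    intro j
    have := Finset.single_le_sum (f := fun j => |t j|) (fun i _ => abs_nonneg _)
      (Finset.mem_univ j)
    simp only [hT]; linarith
  set c0 : ℝ := min c 1 with hc0def
  have hc00 : 0 < c0 := lt_min hc one_pos
  have hc0le1 : c0 ≤ 1 := min_le_right _ _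
  have hc0lec : c0 ≤ c := min_le_left _ _
  set K : ℝ := (A+1)*(κ+1)*(2*T)/c0 with hK
  have hK0 : 0 ≤ K := by positivity
  obtain ⟨M0, hM0⟩ := exists_nat_ge (max T (2*K))
  set M1 : ℕ := max M0 1 with hM1def
  have hM11 : 1 ≤ M1 := le_max_right _ _
  have hM1R0 : (1:ℝ) ≤ (M1:ℝ) := by exact_mod_cast hM11
  have hM1pos : (0:ℝ) < (M1:ℝ) := by linarith
  have hcastM1 : (M0:ℝ) ≤ (M1:ℝ) := by exact_mod_cast Nat.cast_le.mpr (le_max_left M0 1)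
  have hM1T : T ≤ (M1:ℝ) := le_trans (le_trans (le_max_left T (2*K)) hM0) hcastM1
  have hM1K : 2*K ≤ (M1:ℝ) := le_trans (le_trans (le_max_right T (2*K)) hM0) hcastM1
  set B : (Fin N → ℕ) → ℝ :=
    fun m => (M1:ℝ)^M1 * ∏ j, ((1 + (m j : ℝ))^M1 * (1/2:ℝ)^(m j)) with hB
  -- summability of the bound
  have hBsum : Summable B := by
    have h1 : Summable (fun k : ℕ => ((k:ℝ))^M1 * (1/2:ℝ)^k) :=
      summable_pow_mul_geometric_of_norm_lt_one M1
        (by rw [Real.norm_eq_abs, abs_of_pos] <;> norm_num)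
    have h2 : Summable (fun k : ℕ => (((k:ℝ)+1))^M1 * (1/2:ℝ)^(k+1)) := by
      have h2' := h1.comp_injective (Nat.succ_injective)
      refine h2'.congr fun k => ?_
      simp only [Function.comp_apply, Nat.succ_eq_add_one]
      push_cast
      ring
    have h3 : Summable (fun k : ℕ => ((1 + (k:ℝ)))^M1 * (1/2:ℝ)^k) := by
      have h3' := h2.mul_left 2
      refine h3'.congr fun k => ?_
      ring
    have h4 := my_summable_pi_prod _ h3 (fun k => by positivity) N
    exact h4.mul_left _
  clear_value A T c0 K B M1
  -- apply dominated convergence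
  unfold lauricellaFD humbertC
  refine tendsto_tsum_of_dominated_convergence hBsum ?_ ?_
  · -- pointwise limits
    intro m
    beta_reduce
    set s : ℕ := ∑ j, m j with hs
    set Q : ℂ := ∏ j, (ascPochhammer ℂ (m j)).eval ((κ:ℝ):ℂ) with hQ
    set Pc : ℂ := (ascPochhammer ℂ s).eval ((c:ℝ):ℂ) with hPc
    set Fc : ℂ := ∏ j, ((m j).factorial : ℂ) with hFc
    have key : Tendsto (fun M : ℕ => (ascPochhammer ℂ s).eval (-(M:ℂ)*ν) *
        ∏ j, (1 - Complex.exp (((t j : ℝ):ℂ)/(M:ℂ)))^(m j)) atTop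
        (𝓝 (∏ j, (ν * ((t j : ℝ):ℂ))^(m j))) := by
      have hnice : Tendsto (fun M : ℕ => (∏ i ∈ Finset.range s, (-ν + (i:ℂ)/(M:ℂ))) *
          ∏ j, ((M:ℂ) * (1 - Complex.exp (((t j:ℝ):ℂ)/(M:ℂ))))^(m j)) atTop
          (𝓝 ((∏ _i ∈ Finset.range s, (-ν)) * ∏ j, (-((t j:ℝ):ℂ))^(m j))) := by
        refine Tendsto.mul ?_ ?_
        · refine tendsto_finset_prod _ fun i _ => ?_
          have := (my_tendsto_const_div_nat (i:ℂ)).const_add (-ν)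
          simpa using this
        · refine tendsto_finset_prod _ fun j _ => ?_
          exact (my_tendsto_mul_one_sub_exp ((t j:ℝ):ℂ)).pow (m j)
      have hval : (∏ _i ∈ Finset.range s, (-ν)) * ∏ j, (-((t j:ℝ):ℂ))^(m j)
          = ∏ j, (ν * ((t j:ℝ):ℂ))^(m j) := by
        rw [Finset.prod_const, Finset.card_range, hs, ← Finset.prod_pow_eq_pow_sum,
          ← Finset.prod_mul_distrib]
        refine Finset.prod_congr rfl fun j _ => ?_
        rw [← mul_pow]
        ring_nf
      rw [hval] at hnice
      refine hnice.congr' ?_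
      filter_upwards [eventually_ge_atTop 1] with M hM
      have hM0 : (M:ℂ) ≠ 0 := by exact_mod_cast Nat.one_le_iff_ne_zero.mp hM
      have e1 : ∏ i ∈ Finset.range s, (-ν + (i:ℂ)/(M:ℂ))
          = (∏ i ∈ Finset.range s, (-(M:ℂ)*ν + i)) * ((M:ℂ)⁻¹)^s := by
        calc ∏ i ∈ Finset.range s, (-ν + (i:ℂ)/(M:ℂ))
            = ∏ i ∈ Finset.range s, ((-(M:ℂ)*ν + i) * (M:ℂ)⁻¹) :=
              Finset.prod_congr rfl fun i _ => by field_simp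
          _ = (∏ i ∈ Finset.range s, (-(M:ℂ)*ν + i)) * ((M:ℂ)⁻¹)^(Finset.range s).card := by
              rw [Finset.prod_mul_distrib, Finset.prod_const]
          _ = _ := by rw [Finset.card_range]
      have e2 : ∏ j, ((M:ℂ) * (1 - Complex.exp (((t j:ℝ):ℂ)/(M:ℂ))))^(m j)
          = (M:ℂ)^s * ∏ j, (1 - Complex.exp (((t j:ℝ):ℂ)/(M:ℂ)))^(m j) := by
        simp_rw [mul_pow]
        rw [Finset.prod_mul_distrib, Finset.prod_pow_eq_pow_sum]
      have hcancel : ((M:ℂ)⁻¹)^s * (M:ℂ)^s = 1 := by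
        rw [← mul_pow, inv_mul_cancel₀ hM0, one_pow]
      rw [e1, e2, my_ascPochhammer_eval_prod]
      calc (∏ i ∈ Finset.range s, (-(M:ℂ)*ν + i)) * ((M:ℂ)⁻¹)^s *
            ((M:ℂ)^s * ∏ j, (1 - Complex.exp (((t j:ℝ):ℂ)/(M:ℂ)))^(m j))
          = (∏ i ∈ Finset.range s, (-(M:ℂ)*ν + i)) *
              (∏ j, (1 - Complex.exp (((t j:ℝ):ℂ)/(M:ℂ)))^(m j)) *
              (((M:ℂ)⁻¹)^s * (M:ℂ)^s) := by ring
        _ = _ := by rw [hcancel, mul_one]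
    have hG : Q / Pc * ∏ j, ((ν * ((t j:ℝ):ℂ))^(m j) / ((m j).factorial : ℂ))
        = (Q / Pc / Fc) * ∏ j, (ν * ((t j:ℝ):ℂ))^(m j) := by
      rw [Finset.prod_div_distrib, ← hFc]
      ring
    rw [hG]
    refine (key.const_mul (Q / Pc / Fc)).congr fun M => ?_
    rw [Finset.prod_div_distrib, ← hFc]
    ring
  · -- the uniform bound
    filter_upwards [eventually_ge_atTop M1] with M hM
    intro m
    beta_reduce
    have hMR : (M1:ℝ) ≤ (M:ℝ) := by exact_mod_cast Nat.cast_le.mpr hM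
    have hM1R : (1:ℝ) ≤ (M:ℝ) := le_trans hM1R0 hMR
    have hMpos : (0:ℝ) < M := by linarith
    have hMTR : T ≤ (M:ℝ) := le_trans hM1T hMR
    set s : ℕ := ∑ j, m j with hs
    clear_value s
    have hκnorm : ∀ i : ℕ, ‖(κ:ℂ) + (i:ℂ)‖ = κ + i := by
      intro i
      rw [show ((κ:ℂ) + (i:ℂ)) = (((κ + i : ℝ)):ℂ) by push_cast; ring, Complex.norm_real,
        Real.norm_eq_abs, abs_of_nonneg (by positivity)]
    have hcnorm : ∀ i : ℕ, ‖(c:ℂ) + (i:ℂ)‖ = c + i := by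
      intro i
      rw [show ((c:ℂ) + (i:ℂ)) = (((c + i : ℝ)):ℂ) by push_cast; ring, Complex.norm_real,
        Real.norm_eq_abs, abs_of_nonneg (by positivity)]
    simp only [my_ascPochhammer_eval_prod, norm_mul, norm_div, norm_prod, norm_pow,
      RCLike.norm_natCast, hκnorm, hcnorm]
    set P1 : ℝ := ∏ b ∈ Finset.range s, ‖-(M:ℂ) * ν + (b:ℂ)‖ with hP1def
    set Q1 : ℝ := ∏ i ∈ Finset.range s, ((M1:ℝ) + i) with hQ1def
    set FctR : ℝ := ∏ j, ((m j).factorial : ℝ) with hFctR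
    clear_value P1 Q1 FctR
    have hFctRpos : 0 < FctR := by
      rw [hFctR]; exact Finset.prod_pos fun j _ => by positivity
    have hSF : (0:ℝ) < (s.factorial : ℝ) := by positivity
    have hQ10 : (0:ℝ) ≤ Q1 := by
      rw [hQ1def]; exact Finset.prod_nonneg fun i _ => by positivity
    have hP1 : P1 ≤ ((M:ℝ)*(A+1)/(M1:ℝ))^s * Q1 := by
      calc P1 ≤ ∏ i ∈ Finset.range s, ((M:ℝ)*(A+1)/(M1:ℝ) * ((M1:ℝ)+i)) := by
            rw [hP1def]
            refine Finset.prod_le_prod (fun i _ => norm_nonneg _) fun i _ => ?_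
            have hni : ‖-(M:ℂ)*ν + (i:ℂ)‖ ≤ (M:ℝ)*A + i := by
              refine (norm_add_le _ _).trans ?_
              rw [norm_mul, norm_neg, RCLike.norm_natCast, RCLike.norm_natCast, ← hA]
            refine hni.trans ?_
            rw [div_mul_eq_mul_div, le_div_iff₀ hM1pos]
            have hi0 : (0:ℝ) ≤ (i:ℝ) := Nat.cast_nonneg i
            nlinarith [mul_nonneg (mul_nonneg hMpos.le hA0) hi0,
              mul_nonneg (sub_nonneg.mpr hMR) hi0, mul_nonneg hMpos.le hM1pos.le]
        _ = ((M:ℝ)*(A+1)/(M1:ℝ))^s * Q1 := by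
            rw [Finset.prod_mul_distrib, Finset.prod_const, Finset.card_range, ← hQ1def]
    have hP2 : (∏ j, ∏ i ∈ Finset.range (m j), (κ + (i:ℝ))) ≤ (κ+1)^s * FctR := by
      calc (∏ j, ∏ i ∈ Finset.range (m j), (κ + (i:ℝ)))
          ≤ ∏ j, ((κ+1)^(m j) * ((m j).factorial : ℝ)) := by
            refine Finset.prod_le_prod (fun j _ => Finset.prod_nonneg fun i _ => by positivity)
              fun j _ => ?_
            calc ∏ i ∈ Finset.range (m j), (κ + (i:ℝ))
                ≤ ∏ i ∈ Finset.range (m j), ((κ+1) * (1 + (i:ℝ))) := by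
                  refine Finset.prod_le_prod (fun i _ => by positivity) fun i _ => ?_
                  have hi0 : (0:ℝ) ≤ (i:ℝ) := Nat.cast_nonneg i
                  nlinarith
              _ = (κ+1)^(m j) * ((m j).factorial : ℝ) := by
                  rw [Finset.prod_mul_distrib, Finset.prod_const, Finset.card_range,
                    my_prod_one_add]
        _ = (κ+1)^s * FctR := by
            rw [Finset.prod_mul_distrib, Finset.prod_pow_eq_pow_sum, ← hs, ← hFctR]
    have hP3 : c0^s * (s.factorial:ℝ) ≤ ∏ i ∈ Finset.range s, (c + (i:ℝ)) := by
      calc c0^s * (s.factorial:ℝ) = ∏ i ∈ Finset.range s, (c0 * (1 + (i:ℝ))) := by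
            rw [Finset.prod_mul_distrib, Finset.prod_const, Finset.card_range, my_prod_one_add]
        _ ≤ ∏ i ∈ Finset.range s, (c + (i:ℝ)) := by
            refine Finset.prod_le_prod (fun i _ => by positivity) fun i _ => ?_
            have hi0 : (0:ℝ) ≤ (i:ℝ) := Nat.cast_nonneg i
            nlinarith [mul_nonneg (sub_nonneg.mpr hc0le1) hi0]
    have hexp : ∀ j, ‖1 - Complex.exp (((t j:ℝ):ℂ)/(M:ℂ))‖ ≤ 2*T/(M:ℝ) := by
      intro j
      rw [norm_sub_rev]
      have habs : ‖((t j:ℝ):ℂ)/(M:ℂ)‖ ≤ 1 := by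
        rw [norm_div, Complex.norm_real, Real.norm_eq_abs, Complex.norm_natCast, div_le_one hMpos]
        exact (hTj j).trans hMTR
      have h2 := Complex.norm_exp_sub_one_le habs
      refine h2.trans ?_
      rw [norm_div, Complex.norm_real, Real.norm_eq_abs, Complex.norm_natCast, mul_div_assoc]
      gcongr
      exact hTj j
    have hP4 : (∏ j, ‖1 - Complex.exp (((t j:ℝ):ℂ)/(M:ℂ))‖^(m j) / ((m j).factorial : ℝ))
        ≤ (2*T/(M:ℝ))^s / FctR := by
      calc ∏ j, ‖1 - Complex.exp (((t j:ℝ):ℂ)/(M:ℂ))‖^(m j) / ((m j).factorial : ℝ)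
          ≤ ∏ j, ((2*T/(M:ℝ))^(m j) / ((m j).factorial : ℝ)) := by
            refine Finset.prod_le_prod (fun j _ => by positivity) fun j _ => ?_
            gcongr
            exact hexp j
        _ = (2*T/(M:ℝ))^s / FctR := by
            rw [Finset.prod_div_distrib, Finset.prod_pow_eq_pow_sum, ← hs, ← hFctR]
    have hQ1le : Q1 ≤ (s.factorial : ℝ) * ((M1:ℝ) + s)^M1 := by
      have hnat := my_prod_range_factorial_mul M1 hM11 s
      have hcast : Q1 = ((∏ i ∈ Finset.range s, (M1 + i) : ℕ) : ℝ) := by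
        rw [hQ1def]; push_cast; rfl
      rw [hcast]
      calc ((∏ i ∈ Finset.range s, (M1 + i) : ℕ) : ℝ)
          ≤ ((s.factorial * (M1 + s)^M1 : ℕ) : ℝ) := by exact_mod_cast hnat
        _ = (s.factorial : ℝ) * ((M1:ℝ) + s)^M1 := by push_cast; ring
    have hM1ne : (M1:ℝ) ≠ 0 := ne_of_gt hM1pos
    have hMne : (M:ℝ) ≠ 0 := ne_of_gt hMpos
    have hc0ne : c0 ≠ 0 := ne_of_gt hc00
    have hFctRne : FctR ≠ 0 := ne_of_gt hFctRpos
    have hSFne : (s.factorial:ℝ) ≠ 0 := ne_of_gt hSF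
    calc P1 * (∏ j, ∏ i ∈ Finset.range (m j), (κ + (i:ℝ))) /
          (∏ i ∈ Finset.range s, (c + (i:ℝ))) *
          (∏ j, ‖1 - Complex.exp (((t j:ℝ):ℂ)/(M:ℂ))‖^(m j) / ((m j).factorial : ℝ))
        ≤ (((M:ℝ)*(A+1)/(M1:ℝ))^s * Q1) * ((κ+1)^s * FctR) / (c0^s * (s.factorial:ℝ)) *
          ((2*T/(M:ℝ))^s / FctR) := by
          gcongr
      _ = ((M:ℝ)*(A+1)/(M1:ℝ) * ((κ+1) * (2*T/(M:ℝ) / c0)))^s * (Q1/(s.factorial:ℝ)) *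
          (FctR/FctR) := by
          rw [show ((M:ℝ)*(A+1)/(M1:ℝ) * ((κ+1) * (2*T/(M:ℝ) / c0)))^s
              = ((M:ℝ)*(A+1)/(M1:ℝ))^s * ((κ+1)^s * ((2*T/(M:ℝ))^s / c0^s)) by
            rw [mul_pow, mul_pow, div_pow, div_pow]]
          ring
      _ = (K/(M1:ℝ))^s * (Q1 / (s.factorial:ℝ)) := by
          have hbase : (M:ℝ)*(A+1)/(M1:ℝ) * ((κ+1) * (2*T/(M:ℝ) / c0)) = K/(M1:ℝ) := by
            rw [hK]
            field_simp
          rw [div_self hFctRne, mul_one, hbase]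
      _ ≤ (1/2:ℝ)^s * (((M1:ℝ)+s)^M1) := by
          have h1 : K/(M1:ℝ) ≤ 1/2 := by
            rw [div_le_div_iff₀ hM1pos (by norm_num : (0:ℝ) < 2)]
            linarith
          have h2 : Q1 / (s.factorial:ℝ) ≤ ((M1:ℝ)+s)^M1 := by
            rw [div_le_iff₀ hSF]
            calc Q1 ≤ (s.factorial:ℝ) * ((M1:ℝ)+s)^M1 := hQ1le
              _ = ((M1:ℝ)+s)^M1 * (s.factorial:ℝ) := by ring
          have h3 : (0:ℝ) ≤ K/(M1:ℝ) := div_nonneg hK0 hM1pos.le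
          exact mul_le_mul (pow_le_pow_left₀ h3 h1 s) h2 (by positivity) (by positivity)
      _ ≤ (1/2:ℝ)^s * (((M1:ℝ)*(1+(s:ℝ)))^M1) := by
          gcongr
          nlinarith [Nat.cast_nonneg (α := ℝ) s]
      _ = (M1:ℝ)^M1 * ((1+(s:ℝ))^M1 * (1/2:ℝ)^s) := by rw [mul_pow]; ring
      _ ≤ (M1:ℝ)^M1 * ((∏ j, (1+((m j):ℝ)))^M1 * (1/2:ℝ)^s) := by
          gcongr
          calc (1:ℝ) + (s:ℝ) = 1 + ∑ j, ((m j):ℝ) := by rw [hs]; push_cast; ring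
            _ ≤ _ := my_one_add_sum_le_prod m Finset.univ
      _ = B m := by
          simp only [hB]
          rw [Finset.prod_mul_distrib, Finset.prod_pow, Finset.prod_pow_eq_pow_sum, ← hs]

/-- as the positive integer `m → ∞`,
`F_D(-mν, κ,…,κ; nκ; 1-e^{(x₁-xₙ)/m},…,1-e^{(x_{n-1}-xₙ)/m})` converges to
`Φ₂⁽ⁿ⁻¹⁾[κ,…,κ; nκ; ν(x₁-xₙ),…,ν(x_{n-1}-xₙ)]`. -/
theorem lauricella_limit_bessel (n : ℕ) (hn : 2 ≤ n) (κ : ℝ) (hκ : 0 < κ) (ν : ℂ)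
    (x : Fin n → ℝ) :
    Tendsto
      (fun m : ℕ =>
        lauricellaFD (n - 1) (-(m : ℂ) * ν) (fun _ => (κ : ℂ)) ((n : ℂ) * (κ : ℂ))
          (fun j =>
            1 - Complex.exp
              (((x (Fin.castLE (Nat.sub_le n 1) j) - x ⟨n - 1, by omega⟩ : ℝ) : ℂ) / (m : ℂ))))
      atTop
      (nhds (humbertC (n - 1) (fun _ => (κ : ℂ)) ((n : ℂ) * (κ : ℂ))
        (fun j => ν * ((x (Fin.castLE (Nat.sub_le n 1) j) - x ⟨n - 1, by omega⟩ : ℝ) : ℂ)))) := by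
  have hnpos : (0:ℝ) < (n:ℝ) := by
    have : 0 < n := by omega
    exact_mod_cast this
  have h := my_main (n-1) κ ((n:ℝ)*κ) hκ (mul_pos hnpos hκ) ν
    (fun j => x (Fin.castLE (Nat.sub_le n 1) j) - x ⟨n - 1, by omega⟩)
  have hcast : (((n:ℝ)*κ : ℝ) : ℂ) = (n:ℂ)*(κ:ℂ) := by push_cast; ring
  rw [hcast] at h
  exact h
end

section
/- Let n ≥ 2 and let a₁,…,aₙ be positive real numbers. Then ∫_{T^{n−1}} ∏_{j=1}^n t_j^{a_j−1} dt₁⋯dt_{n−1} = (∏_{j=1}^n Γ(a_j)) / Γ(a₁+⋯+aₙ), where in the integrand tₙ denotes 1 − Σ_{j=1}^{n−1} t_j. -/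
open Finset MeasureTheory

/-- The open unit simplex `Tᵐ ⊆ ℝᵐ`. -/
def unitSimplex (m : ℕ) : Set (Fin m → ℝ) :=
  {t | (∀ j, 0 < t j) ∧ ∑ j, t j < 1}

/-- Extend `t = (t₁,…,t_{n-1}) ∈ T^{n-1}` to `(t₁,…,t_{n-1},tₙ)` with
`tₙ = 1 - ∑_{j<n} t_j`. -/
noncomputable def tExt (n : ℕ) (t : Fin (n - 1) → ℝ) : Fin n → ℝ := fun j =>
  if h : (j : ℕ) < n - 1 then t ⟨j, h⟩ else 1 - ∑ i, t i

section Beta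

lemma beta_aux (p q : ℝ) :
    Set.EqOn (fun x : ℝ => ((x ^ (p-1) * (1-x) ^ (q-1) : ℝ) : ℂ))
      (fun x : ℝ => (x:ℂ) ^ ((p:ℂ)-1) * (1-(x:ℂ)) ^ ((q:ℂ)-1)) (Set.Icc 0 1) := by
  intro x hx
  simp only [Complex.ofReal_mul]
  rw [Complex.ofReal_cpow hx.1, Complex.ofReal_cpow (by linarith [hx.2])]
  push_cast
  ring_nf

lemma beta_integrable (p q : ℝ) (hp : 0 < p) (hq : 0 < q) :
    IntegrableOn (fun x : ℝ => x ^ (p-1) * (1-x) ^ (q-1)) (Set.Ioc 0 1) := by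
  have h := (Complex.betaIntegral_convergent (u := p) (v := q) (by simpa) (by simpa)).1
  have h2 : IntegrableOn (fun x : ℝ => ((x ^ (p-1) * (1-x) ^ (q-1) : ℝ) : ℂ)) (Set.Ioc 0 1) := by
    refine h.congr_fun ?_ measurableSet_Ioc
    intro x hx
    exact (beta_aux p q (Set.Ioc_subset_Icc_self hx)).symm
  have h3 : Integrable (fun x : ℝ => x ^ (p-1) * (1-x) ^ (q-1)) (volume.restrict (Set.Ioc 0 1)) := by
    simpa using h2.re
  exact h3

lemma beta_value (p q : ℝ) (hp : 0 < p) (hq : 0 < q) :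
    ∫ x in (0:ℝ)..1, x ^ (p-1) * (1-x) ^ (q-1)
      = Real.Gamma p * Real.Gamma q / Real.Gamma (p+q) := by
  have hG : (0:ℝ) < Real.Gamma (p+q) := Real.Gamma_pos_of_pos (by linarith)
  have h := Complex.Gamma_mul_Gamma_eq_betaIntegral (s := p) (t := q) (by simpa) (by simpa)
  have hbeta : Complex.betaIntegral p q
      = ((∫ x in (0:ℝ)..1, x ^ (p-1) * (1-x) ^ (q-1) : ℝ) : ℂ) := by
    rw [Complex.betaIntegral, ← intervalIntegral.integral_ofReal]
    refine intervalIntegral.integral_congr ?_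
    intro x hx
    rw [Set.uIcc_of_le zero_le_one] at hx
    exact (beta_aux p q hx).symm
  rw [hbeta] at h
  have hpq : ((p:ℂ) + q) = ((p + q : ℝ) : ℂ) := by push_cast; ring
  rw [hpq, Complex.Gamma_ofReal, Complex.Gamma_ofReal, Complex.Gamma_ofReal] at h
  rw [← Complex.ofReal_mul, ← Complex.ofReal_mul] at h
  have h' := Complex.ofReal_injective h
  field_simp
  linarith [h']

lemma beta_scaled_eqOn (c p q : ℝ) (hc : 0 < c) :
    Set.EqOn (fun x : ℝ => x ^ (p-1) * (c-x) ^ (q-1))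
      (fun x : ℝ => c ^ (p+q-2) * ((x/c) ^ (p-1) * (1-x/c) ^ (q-1))) (Set.Ioc 0 c) := by
  intro x hx
  have hx0 : 0 < x := hx.1
  have hxc : x ≤ c := hx.2
  have h1 : x = c * (x / c) := by field_simp
  have h2 : c - x = c * (1 - x / c) := by field_simp
  have hd : (0:ℝ) ≤ x / c := by positivity
  have hd2 : (0:ℝ) ≤ 1 - x / c := by
    rw [sub_nonneg, div_le_one hc]; exact hxc
  simp only
  nth_rewrite 1 [h1]
  rw [h2, Real.mul_rpow hc.le hd, Real.mul_rpow hc.le hd2]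
  rw [show p + q - 2 = (p-1) + (q-1) by ring, Real.rpow_add hc]
  ring

lemma beta_scaled_integrable (c p q : ℝ) (hc : 0 < c) (hp : 0 < p) (hq : 0 < q) :
    IntegrableOn (fun x : ℝ => x ^ (p-1) * (c-x) ^ (q-1)) (Set.Ioc 0 c) := by
  have h1 : IntervalIntegrable (fun x : ℝ => x ^ (p-1) * (1-x) ^ (q-1)) volume 0 1 := by
    rw [intervalIntegrable_iff_integrableOn_Ioc_of_le zero_le_one]
    exact beta_integrable p q hp hq
  have h2 := h1.comp_mul_right (c := 1/c)
  have h2' : IntervalIntegrable (fun x : ℝ => (x/c) ^ (p-1) * (1-x/c) ^ (q-1)) volume 0 c := by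
    simpa [mul_one_div, one_div_one_div, div_eq_mul_inv] using h2
  rw [intervalIntegrable_iff_integrableOn_Ioc_of_le hc.le] at h2'
  exact IntegrableOn.congr_fun (h2'.const_mul (c ^ (p+q-2)))
    (fun x hx => (beta_scaled_eqOn c p q hc hx).symm) measurableSet_Ioc

lemma beta_scaled_value (c p q : ℝ) (hc : 0 < c) (hp : 0 < p) (hq : 0 < q) :
    ∫ x in Set.Ioc 0 c, x ^ (p-1) * (c-x) ^ (q-1)
      = c ^ (p+q-1) * (Real.Gamma p * Real.Gamma q / Real.Gamma (p+q)) := by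
  rw [setIntegral_congr_fun measurableSet_Ioc (beta_scaled_eqOn c p q hc),
    MeasureTheory.integral_const_mul, ← intervalIntegral.integral_of_le hc.le,
    intervalIntegral.integral_comp_div (fun y : ℝ => y ^ (p-1) * (1-y) ^ (q-1)) hc.ne',
    zero_div, div_self hc.ne', beta_value p q hp hq]
  rw [smul_eq_mul, show p + q - 1 = (p + q - 2) + 1 by ring, Real.rpow_add hc,
    Real.rpow_one]
  ring

lemma beta_lintegral (c p q : ℝ) (hc : 0 < c) (hp : 0 < p) (hq : 0 < q) :
    ∫⁻ x in Set.Ioo 0 c, ENNReal.ofReal (x ^ (p-1) * (c-x) ^ (q-1))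
      = ENNReal.ofReal (c ^ (p+q-1) * (Real.Gamma p * Real.Gamma q / Real.Gamma (p+q))) := by
  rw [Measure.restrict_congr_set MeasureTheory.Ioo_ae_eq_Ioc]
  rw [← beta_scaled_value c p q hc hp hq]
  rw [← ofReal_integral_eq_lintegral_ofReal (beta_scaled_integrable c p q hc hp hq)]
  refine (ae_restrict_iff' measurableSet_Ioc).mpr (Filter.Eventually.of_forall ?_)
  intro x hx
  have h2 : (0:ℝ) ≤ c - x := by linarith [hx.2]
  exact mul_nonneg (Real.rpow_nonneg hx.1.le _) (Real.rpow_nonneg h2 _)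

end Beta

section Structural

lemma tExt_eq_snoc (m : ℕ) (t : Fin m → ℝ) :
    tExt (m+1) t = Fin.snoc t (1 - ∑ i, t i) := by
  funext j
  refine Fin.lastCases ?_ (fun i => ?_) j
  · simp [tExt]
  · simp [tExt, i.isLt, Fin.snoc_castSucc]

lemma measurableSet_unitSimplex (m : ℕ) : MeasurableSet (unitSimplex m) := by
  have : unitSimplex m = (⋂ j, {t : Fin m → ℝ | 0 < t j}) ∩ {t : Fin m → ℝ | ∑ j, t j < 1} := by
    ext t; simp [unitSimplex]
  rw [this]
  exact (MeasurableSet.iInter fun j =>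
      measurableSet_lt measurable_const (measurable_pi_apply j)).inter
    (measurableSet_lt (Finset.measurable_sum _ fun i _ => measurable_pi_apply i) measurable_const)

lemma measurable_tExt (m : ℕ) (j : Fin (m+1)) :
    Measurable fun t : Fin m → ℝ => tExt (m+1) t j := by
  unfold tExt
  by_cases h : (j:ℕ) < m
  · simpa [h] using measurable_pi_apply (⟨(j:ℕ), h⟩ : Fin m)
  · simp only [Nat.add_sub_cancel, h, dif_neg, not_false_iff]
    exact measurable_const.sub (Finset.measurable_sum _ fun i _ => measurable_pi_apply i)

lemma measurable_integrand (m : ℕ) (b : Fin (m+1) → ℝ) :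
    Measurable fun t : Fin m → ℝ => ∏ j, (tExt (m+1) t j) ^ (b j - 1) :=
  Finset.measurable_prod _ fun j _ =>
    (by measurability : Measurable fun x : ℝ => x ^ (b j - 1)).comp (measurable_tExt m j)

lemma tExt_pos {m : ℕ} {t : Fin m → ℝ} (ht : t ∈ unitSimplex m) (j : Fin (m+1)) :
    0 < tExt (m+1) t j := by
  unfold tExt
  by_cases h : (j:ℕ) < m
  · simpa [h] using ht.1 _
  · simp only [Nat.add_sub_cancel, h, dif_neg, not_false_iff]
    exact sub_pos.mpr ht.2

lemma forall_snoc_iff {m : ℕ} (u : ℝ) (s : Fin m → ℝ) (P : ℝ → Prop) :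
    (∀ j, P ((Fin.snoc s u : Fin (m+1) → ℝ) j)) ↔ (∀ i, P (s i)) ∧ P u := by
  constructor
  · intro h
    exact ⟨fun i => by simpa [Fin.snoc_castSucc] using h i.castSucc,
      by simpa [Fin.snoc_last] using h (Fin.last m)⟩
  · intro ⟨h1, h2⟩ j
    refine Fin.lastCases ?_ (fun i => ?_) j <;> simp [h1, h2]

lemma snoc_mem_unitSimplex_iff {m : ℕ} (u : ℝ) (s : Fin m → ℝ) :
    ((Fin.snoc s u : Fin (m+1) → ℝ) ∈ unitSimplex (m+1)) ↔
      ((∀ i, 0 < s i) ∧ u ∈ Set.Ioo 0 (1 - ∑ i, s i)) := by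
  unfold unitSimplex
  rw [Set.mem_setOf_eq, Fin.sum_snoc, forall_snoc_iff]
  constructor
  · rintro ⟨⟨h1, h2⟩, h3⟩; exact ⟨h1, h2, by linarith⟩
  · rintro ⟨h1, h2, h3⟩; exact ⟨⟨h1, h2⟩, by linarith⟩

lemma prod_tExt_snoc {m : ℕ} (b : Fin (m+2) → ℝ) (u : ℝ) (s : Fin m → ℝ) :
    ∏ j, (tExt (m+2) (Fin.snoc s u) j) ^ (b j - 1)
      = (∏ i, s i ^ (b i.castSucc.castSucc - 1))
        * u ^ (b (Fin.last m).castSucc - 1)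
        * (1 - (∑ i, s i + u)) ^ (b (Fin.last (m+1)) - 1) := by
  rw [show tExt (m+2) (Fin.snoc s u)
      = Fin.snoc (Fin.snoc s u) (1 - (∑ i, s i + u)) by
    rw [tExt_eq_snoc (m+1) (Fin.snoc s u), Fin.sum_snoc]]
  rw [Fin.prod_univ_castSucc, Fin.prod_univ_castSucc]
  simp only [Fin.snoc_castSucc, Fin.snoc_last]

lemma measurable_beta_integrand (c p q : ℝ) :
    Measurable fun u : ℝ => ENNReal.ofReal (u ^ (p-1) * (c-u) ^ (q-1)) := by
  have h1 : Measurable fun u : ℝ => u ^ (p-1) := by measurability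
  have h2 : Measurable fun u : ℝ => (c-u) ^ (q-1) :=
    (by measurability : Measurable fun x : ℝ => x ^ (q-1)).comp
      (measurable_const.sub measurable_id)
  exact (h1.mul h2).ennreal_ofReal

end Structural

lemma dirichlet_lintegral : ∀ (m : ℕ) (b : Fin (m+1) → ℝ), (∀ j, 0 < b j) →
    ∫⁻ t in unitSimplex m, ENNReal.ofReal (∏ j, (tExt (m+1) t j) ^ (b j - 1))
      = ENNReal.ofReal ((∏ j, Real.Gamma (b j)) / Real.Gamma (∑ j, b j)) := by
  intro m
  induction m with
  | zero =>
    intro b hb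
    have hS : unitSimplex 0 = Set.univ := by
      ext t; simp [unitSimplex]
    have hf : ∀ t : Fin 0 → ℝ, (∏ j, (tExt 1 t j) ^ (b j - 1)) = 1 := by
      intro t
      rw [Fin.prod_univ_one]
      simp [tExt]
    rw [hS, Measure.restrict_univ]
    rw [lintegral_congr (fun t => by rw [hf t])]
    rw [lintegral_const]
    have hvol : (volume : Measure (Fin 0 → ℝ)) Set.univ = 1 := by
      simp [MeasureTheory.volume_pi, MeasureTheory.Measure.pi_empty_univ]
    rw [hvol, mul_one]
    rw [Fin.prod_univ_one, Fin.sum_univ_one,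
      div_self (Real.Gamma_pos_of_pos (hb 0)).ne']
  | succ m ih =>
    intro b hb
    set p := b (Fin.last m).castSucc with hp_def
    set q := b (Fin.last (m+1)) with hq_def
    have hp : 0 < p := hb _
    have hq : 0 < q := hb _
    set K := Real.Gamma p * Real.Gamma q / Real.Gamma (p + q) with hK_def
    have hGpq : 0 < Real.Gamma (p + q) := Real.Gamma_pos_of_pos (add_pos hp hq)
    have hK0 : 0 ≤ K := by
      have h1 := Real.Gamma_pos_of_pos hp
      have h2 := Real.Gamma_pos_of_pos hq
      positivity
    set b' : Fin (m+1) → ℝ :=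
      Fin.snoc (fun i : Fin m => b i.castSucc.castSucc) (p + q) with hb'_def
    have hb' : ∀ i, 0 < b' i := by
      intro i
      refine Fin.lastCases ?_ (fun i' => ?_) i
      · simp only [hb'_def, Fin.snoc_last]
        exact add_pos hp hq
      · simp only [hb'_def, Fin.snoc_castSucc]
        exact hb _
    set f : (Fin (m+1) → ℝ) → ENNReal :=
      fun t => ENNReal.ofReal (∏ j, (tExt (m+2) t j) ^ (b j - 1)) with hf_def
    have hfm : Measurable f := (measurable_integrand (m+1) b).ennreal_ofReal
    set F := Set.indicator (unitSimplex (m+1)) f with hF_def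
    have hFm : Measurable F := hfm.indicator (measurableSet_unitSimplex (m+1))
    rw [← lintegral_indicator (measurableSet_unitSimplex (m+1))]
    set e := MeasurableEquiv.piFinSuccAbove (fun _ : Fin (m+1) => ℝ) (Fin.last m) with he_def
    have hesymm : ∀ (u : ℝ) (s : Fin m → ℝ), e.symm (u, s) = Fin.snoc s u := by
      intro u s; funext j
      simp [he_def, MeasurableEquiv.piFinSuccAbove, Fin.insertNth_last]
    have mp : MeasurePreserving e.symm volume volume :=
      (MeasureTheory.volume_preserving_piFinSuccAbove (fun _ : Fin (m+1) => ℝ) (Fin.last m)).symm e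
    rw [← mp.lintegral_comp hFm]
    rw [MeasureTheory.Measure.volume_eq_prod]
    rw [lintegral_prod_symm (fun z : ℝ × (Fin m → ℝ) => F (e.symm z))
      ((hFm.comp e.symm.measurable).aemeasurable)]
    have key : ∀ s : Fin m → ℝ, (∫⁻ u, F (e.symm (u, s))) =
        Set.indicator (unitSimplex m)
          (fun s => ENNReal.ofReal ((∏ i, (tExt (m+1) s i) ^ (b' i - 1)) * K)) s := by
      intro s
      simp only [hesymm]
      by_cases hs : s ∈ unitSimplex m
      · set c := 1 - ∑ i, s i with hc_def
        have hc : 0 < c := by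
          have := hs.2
          simp only [hc_def]
          linarith
        set A := ∏ i, s i ^ (b i.castSucc.castSucc - 1) with hA_def
        have hA0 : 0 ≤ A :=
          Finset.prod_nonneg fun i _ => Real.rpow_nonneg (hs.1 i).le _
        have hpt : ∀ u : ℝ, F (Fin.snoc s u) =
            Set.indicator (Set.Ioo 0 c)
              (fun u => ENNReal.ofReal (A * (u ^ (p-1) * (c-u) ^ (q-1)))) u := by
          intro u
          by_cases hu : u ∈ Set.Ioo 0 c
          · have hmem : (Fin.snoc s u : Fin (m+1) → ℝ) ∈ unitSimplex (m+1) :=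
              (snoc_mem_unitSimplex_iff u s).mpr ⟨hs.1, hu⟩
            rw [hF_def, Set.indicator_of_mem hmem, Set.indicator_of_mem hu]
            simp only [hf_def]
            congr 1
            rw [prod_tExt_snoc b u s]
            have hcu : 1 - (∑ i, s i + u) = c - u := by rw [hc_def]; ring
            rw [hcu, ← hp_def, ← hq_def, ← hA_def]
            ring
          · have hmem : (Fin.snoc s u : Fin (m+1) → ℝ) ∉ unitSimplex (m+1) := by
              rw [snoc_mem_unitSimplex_iff]
              rintro ⟨_, h2⟩
              exact hu h2
            rw [hF_def, Set.indicator_of_notMem hmem, Set.indicator_of_notMem hu]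
        rw [Set.indicator_of_mem hs]
        calc ∫⁻ u, F (Fin.snoc s u)
            = ∫⁻ u in Set.Ioo 0 c, ENNReal.ofReal (A * (u ^ (p-1) * (c-u) ^ (q-1))) := by
              rw [← lintegral_indicator measurableSet_Ioo]
              exact lintegral_congr hpt
          _ = ∫⁻ u in Set.Ioo 0 c,
                ENNReal.ofReal A * ENNReal.ofReal (u ^ (p-1) * (c-u) ^ (q-1)) := by
              refine lintegral_congr fun u => ?_
              rw [ENNReal.ofReal_mul hA0]
          _ = ENNReal.ofReal A * ENNReal.ofReal (c ^ (p+q-1) * K) := by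
              rw [lintegral_const_mul _ (measurable_beta_integrand c p q),
                beta_lintegral c p q hc hp hq, hK_def]
          _ = ENNReal.ofReal ((∏ i, (tExt (m+1) s i) ^ (b' i - 1)) * K) := by
              rw [← ENNReal.ofReal_mul hA0]
              congr 1
              rw [tExt_eq_snoc m s, Fin.prod_univ_castSucc]
              simp only [Fin.snoc_castSucc, Fin.snoc_last, hb'_def, ← hc_def, ← hA_def]
              ring
      · rw [Set.indicator_of_notMem hs]
        have hzero : ∀ u : ℝ, F (Fin.snoc s u) = 0 := by
          intro u
          rw [hF_def]
          refine Set.indicator_of_notMem ?_ _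
          rw [snoc_mem_unitSimplex_iff]
          rintro ⟨h1, h2⟩
          refine hs ⟨h1, ?_⟩
          have := h2.1
          have := h2.2
          linarith
        simp [hzero]
    rw [lintegral_congr key]
    rw [lintegral_indicator (measurableSet_unitSimplex m)]
    rw [setLIntegral_congr_fun (measurableSet_unitSimplex m)
      ((fun s hs => by
        rw [ENNReal.ofReal_mul
          (Finset.prod_nonneg fun i _ => Real.rpow_nonneg (tExt_pos hs i).le _)]))]
    rw [lintegral_mul_const _ ((measurable_integrand m b').ennreal_ofReal)]
    rw [ih b' hb']
    have hposq : 0 ≤ (∏ i, Real.Gamma (b' i)) / Real.Gamma (∑ i, b' i) := by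
      have h1 : 0 < ∏ i, Real.Gamma (b' i) :=
        Finset.prod_pos fun i _ => Real.Gamma_pos_of_pos (hb' i)
      have h2 : 0 < Real.Gamma (∑ i, b' i) :=
        Real.Gamma_pos_of_pos (Finset.sum_pos (fun i _ => hb' i) Finset.univ_nonempty)
      positivity
    rw [← ENNReal.ofReal_mul hposq]
    congr 1
    have hsum : ∑ i, b' i = ∑ j, b j := by
      rw [hb'_def, Fin.sum_snoc, Fin.sum_univ_castSucc (n := m+1),
        Fin.sum_univ_castSucc (n := m)]
      rw [← hp_def, ← hq_def]
      ring
    have hprodG : ∏ i, Real.Gamma (b' i)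
        = (∏ i : Fin m, Real.Gamma (b i.castSucc.castSucc)) * Real.Gamma (p + q) := by
      rw [Fin.prod_univ_castSucc]
      simp only [hb'_def, Fin.snoc_castSucc, Fin.snoc_last]
    have hprodG2 : ∏ j, Real.Gamma (b j)
        = (∏ i : Fin m, Real.Gamma (b i.castSucc.castSucc))
          * (Real.Gamma p * Real.Gamma q) := by
      rw [Fin.prod_univ_castSucc (n := m+1), Fin.prod_univ_castSucc (n := m),
        ← hp_def, ← hq_def]
      ring
    have hGs : Real.Gamma (∑ j, b j) ≠ 0 := by
      refine (Real.Gamma_pos_of_pos ?_).ne'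
      exact Finset.sum_pos (fun j _ => hb j) Finset.univ_nonempty
    rw [hsum, hprodG, hprodG2, hK_def]
    field_simp

/-- the Dirichlet integral over the simplex,
`∫_{T^{n-1}} ∏_{j=1}^n t_j^{a_j-1} dt = ∏ Γ(a_j) / Γ(a₁+⋯+aₙ)`. -/
theorem dirichlet_integral (n : ℕ) (hn : 2 ≤ n) (a : Fin n → ℝ) (ha : ∀ j, 0 < a j) :
    ∫ t in unitSimplex (n - 1), ∏ j, (tExt n t j) ^ (a j - 1) =
      (∏ j, Real.Gamma (a j)) / Real.Gamma (∑ j, a j) := by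
  obtain ⟨m, rfl⟩ : ∃ m, n = m + 1 := ⟨n - 1, by omega⟩
  have hmeasS := measurableSet_unitSimplex m
  show ∫ t in unitSimplex m, ∏ j, (tExt (m+1) t j) ^ (a j - 1) =
      (∏ j, Real.Gamma (a j)) / Real.Gamma (∑ j, a j)
  rw [integral_eq_lintegral_of_nonneg_ae ?_ ?_]
  · rw [dirichlet_lintegral m a ha]
    rw [ENNReal.toReal_ofReal]
    have h1 : 0 < ∏ j, Real.Gamma (a j) :=
      Finset.prod_pos fun j _ => Real.Gamma_pos_of_pos (ha j)
    have h2 : 0 < Real.Gamma (∑ j, a j) :=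
      Real.Gamma_pos_of_pos (Finset.sum_pos (fun j _ => ha j) Finset.univ_nonempty)
    positivity
  · refine (ae_restrict_iff' hmeasS).mpr (Filter.Eventually.of_forall fun t ht => ?_)
    exact Finset.prod_nonneg fun j _ => Real.rpow_nonneg (tExt_pos ht j).le _
  · exact ((measurable_integrand m a).aestronglyMeasurable).restrict
end
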